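/- Let B be an invertible real m×m matrix with B = T·W where T and W are invertible real symmetric m×m matrices. If all m eigenvalues of B over ℂ are non-real (i.e., the characteristic polynomial of B has no real roots), then m is even and the inertia of T equals (m/2, m/2, 0) and the inertia of W equals (m/2, m/2, 0); that is, both T and W have exactly m/2 positive and m/2 negative eigenvalues counted with multiplicity. -/

import Mathlib

set_option linter.unusedSectionVars false
set_option maxHeartbeats 1000000

open Matrix Polynomial

/-- Number of positive eigenvalues (counted with multiplicity, as roots of the
characteristic polynomial) of a real square matrix. -/
noncomputable def posEig {m : ℕ} (M : Matrix (Fin m) (Fin m) ℝ) : ℕ :=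
  (M.charpoly.roots.filter (fun x : ℝ => 0 < x)).card

/-- Number of negative eigenvalues (counted with multiplicity). -/
noncomputable def negEig {m : ℕ} (M : Matrix (Fin m) (Fin m) ℝ) : ℕ :=
  (M.charpoly.roots.filter (fun x : ℝ => x < 0)).card

/-- Number of zero eigenvalues (counted with multiplicity). -/
noncomputable def zeroEig {m : ℕ} (M : Matrix (Fin m) (Fin m) ℝ) : ℕ :=
  (M.charpoly.roots.filter (fun x : ℝ => x = 0)).card

open Matrix Polynomial

section CharpolyAux
variable {n : Type*} [Fintype n] [DecidableEq n] {R : Type*} [CommRing R]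

lemma my_charmatrix_diagonal (d : n → R) :
    charmatrix (diagonal d) = diagonal (fun i => (X : R[X]) - C (d i)) := by
  ext i j
  by_cases h : i = j
  · subst h; simp [charmatrix_apply, diagonal_apply_eq]
  · simp [charmatrix_apply_ne _ _ _ h, diagonal_apply_ne _ h, diagonal_apply_ne' , h]

lemma my_charpoly_diagonal (d : n → R) :
    (diagonal d).charpoly = ∏ i, ((X : R[X]) - C (d i)) := by
  rw [Matrix.charpoly, my_charmatrix_diagonal, det_diagonal]

lemma my_charpoly_conj (U D V : Matrix n n R) (h : V * U = 1) :
    (U * D * V).charpoly = D.charpoly := by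
  have h2 : U * V = 1 := mul_eq_one_comm.mp h
  have hcomm : ∀ (A : Matrix n n R[X]), Matrix.scalar n (X : R[X]) * A
      = A * Matrix.scalar n (X : R[X]) :=
    fun A => (scalar_commute (X : R[X]) (fun r' => Commute.all _ _) A).eq
  have key : charmatrix (U * D * V) =
      (C.mapMatrix U) * charmatrix D * (C.mapMatrix V) := by
    show Matrix.scalar n (X : R[X]) - C.mapMatrix (U * D * V) = _
    have hUV : (C.mapMatrix U) * (C.mapMatrix V) = 1 := by
      rw [← _root_.map_mul, h2]; simp
    have hsc : Matrix.scalar n (X : R[X]) =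
        (C.mapMatrix U) * Matrix.scalar n (X : R[X]) * (C.mapMatrix V) := by
      rw [mul_assoc, hcomm, ← mul_assoc, hUV, one_mul]
    conv_lhs => rw [hsc]
    show _ = C.mapMatrix U * (Matrix.scalar n (X : R[X]) - C.mapMatrix D) * C.mapMatrix V
    rw [mul_sub, sub_mul, _root_.map_mul, _root_.map_mul]
  rw [Matrix.charpoly, key, det_mul, det_mul, Matrix.charpoly]
  have hd : (C.mapMatrix U).det * (C.mapMatrix V).det = 1 := by
    rw [← det_mul, ← _root_.map_mul, h2]; simp
  calc (C.mapMatrix U).det * (charmatrix D).det * (C.mapMatrix V).det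
      = (C.mapMatrix U).det * (C.mapMatrix V).det * (charmatrix D).det := by ring
    _ = (charmatrix D).det := by rw [hd, one_mul]

lemma my_eval_charpoly (M : Matrix n n R) (x : R) :
    M.charpoly.eval x = (x • (1 : Matrix n n R) - M).det := by
  rw [Matrix.charpoly, ← Polynomial.coe_evalRingHom, RingHom.map_det]
  congr 1
  ext i j
  by_cases h : i = j
  · subst h; simp [charmatrix_apply_eq, Matrix.smul_apply, one_apply_eq]
  · simp [charmatrix_apply_ne _ _ _ h, one_apply_ne h, h]

end CharpolyAux

section Herm
variable {m : ℕ} {M : Matrix (Fin m) (Fin m) ℝ}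

lemma isHermitian_of_isSymm' (h : M.IsSymm) : M.IsHermitian := by
  ext i j
  rw [conjTranspose_apply, star_trivial]
  exact congrFun (congrFun h i) j

lemma charpoly_eq_prod (hM : M.IsHermitian) :
    M.charpoly = ∏ i, ((X : ℝ[X]) - C (hM.eigenvalues i)) := by
  conv_lhs => rw [hM.spectral_theorem]
  simp only [Unitary.conjStarAlgAut_apply, Unitary.coe_star]
  rw [my_charpoly_conj _ _ _ ((Unitary.mem_iff.mp (hM.eigenvectorUnitary).2).1)]
  have : diagonal ((RCLike.ofReal : ℝ → ℝ) ∘ hM.eigenvalues) = diagonal hM.eigenvalues := by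
    rw [RCLike.ofReal_real_eq_id]; rfl
  rw [this, my_charpoly_diagonal]

lemma roots_charpoly_herm (hM : M.IsHermitian) :
    M.charpoly.roots = Finset.univ.val.map hM.eigenvalues := by
  rw [charpoly_eq_prod hM]
  have : ∏ i, ((X : ℝ[X]) - C (hM.eigenvalues i))
      = ((Finset.univ.val.map hM.eigenvalues).map (fun a : ℝ => X - C a)).prod := by
    rw [Multiset.map_map]; rfl
  rw [this, Polynomial.roots_multiset_prod_X_sub_C]

lemma count_filter_roots (hM : M.IsHermitian) (p : ℝ → Prop) [DecidablePred p] :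
    (M.charpoly.roots.filter p).card
      = (Finset.univ.filter (fun i => p (hM.eigenvalues i))).card := by
  rw [roots_charpoly_herm hM]
  rw [Multiset.filter_map, Multiset.card_map]
  rfl

end Herm

section Counts
variable {m : ℕ} {M : Matrix (Fin m) (Fin m) ℝ}

lemma posEig_eq_count (hM : M.IsHermitian) :
    posEig M = (Finset.univ.filter (fun i => 0 < hM.eigenvalues i)).card :=
  count_filter_roots hM _

lemma negEig_eq_count (hM : M.IsHermitian) :
    negEig M = (Finset.univ.filter (fun i => hM.eigenvalues i < 0)).card :=
  count_filter_roots hM _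

lemma zeroEig_eq_count (hM : M.IsHermitian) :
    zeroEig M = (Finset.univ.filter (fun i => hM.eigenvalues i = 0)).card :=
  count_filter_roots hM _

lemma eigenvalues_ne_zero (hM : M.IsHermitian) (hdet : IsUnit M.det) (i : Fin m) :
    hM.eigenvalues i ≠ 0 := by
  intro h0
  have hd : M.det = ∏ i, hM.eigenvalues i := by
    have := hM.det_eq_prod_eigenvalues
    simpa using this
  rw [isUnit_iff_ne_zero, hd] at hdet
  exact hdet (Finset.prod_eq_zero (Finset.mem_univ i) h0)

lemma zeroEig_eq_zero (hM : M.IsHermitian) (hdet : IsUnit M.det) : zeroEig M = 0 := by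
  rw [zeroEig_eq_count hM, Finset.card_eq_zero, Finset.filter_eq_empty_iff]
  intro i _
  exact eigenvalues_ne_zero hM hdet i

lemma posEig_add_negEig (hM : M.IsHermitian) (hdet : IsUnit M.det) :
    posEig M + negEig M = m := by
  rw [posEig_eq_count hM, negEig_eq_count hM]
  have h := Finset.card_filter_add_card_filter_not
    (s := Finset.univ (α := Fin m)) (p := fun i => 0 < hM.eigenvalues i)
  rw [Finset.card_univ, Fintype.card_fin] at h
  have he : (Finset.filter (fun a => ¬0 < hM.eigenvalues a) Finset.univ)
      = (Finset.filter (fun i => hM.eigenvalues i < 0) Finset.univ) := by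
    apply Finset.filter_congr
    intro i _
    simp only [not_lt, eq_iff_iff]
    constructor
    · exact fun h' => lt_of_le_of_ne h' (eigenvalues_ne_zero hM hdet i)
    · exact le_of_lt
  rw [he] at h
  exact h

section QF
variable {m : ℕ}

noncomputable def qf (M : Matrix (Fin m) (Fin m) ℝ) (x : Fin m → ℝ) : ℝ := x ⬝ᵥ M *ᵥ x

def PosDefOn (M : Matrix (Fin m) (Fin m) ℝ) (V : Submodule ℝ (Fin m → ℝ)) : Prop :=
  ∀ x ∈ V, x ≠ 0 → 0 < qf M x

variable (P : Fin m → Prop) [DecidablePred P]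

noncomputable def coordSpan : Submodule ℝ (Fin m → ℝ) :=
  Submodule.span ℝ (Set.range (fun j : {i // P i} => Pi.single (j : Fin m) (1 : ℝ)))

lemma coordSpan_mem {x : Fin m → ℝ} (hx : x ∈ coordSpan P) :
    ∀ i, ¬ P i → x i = 0 := by
  induction hx using Submodule.span_induction with
  | mem y hy =>
    obtain ⟨j, rfl⟩ := hy
    intro i hi
    exact Pi.single_eq_of_ne (fun h : i = (j : Fin m) => hi (h ▸ j.2)) 1
  | zero => intro i _; rfl
  | add y z _ _ hy hz => intro i hi; simp [Pi.add_apply, hy i hi, hz i hi]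
  | smul c y _ hy => intro i hi; simp [Pi.smul_apply, hy i hi]

lemma coordSpan_finrank :
    Module.finrank ℝ (coordSpan P) = (Finset.univ.filter P).card := by
  rw [coordSpan]
  have hli : LinearIndependent ℝ (fun j : {i // P i} => (Pi.single (j : Fin m) 1 : Fin m → ℝ)) := by
    have h : LinearIndependent ℝ (fun i : Fin m => (Pi.single i 1 : Fin m → ℝ)) := by
      have hb := (Pi.basisFun ℝ (Fin m)).linearIndependent
      convert hb using 1
      funext i
      simp [Pi.basisFun_apply]
    have h2 := h.comp (Subtype.val : {i // P i} → Fin m) Subtype.val_injective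
    exact h2
  rw [finrank_span_eq_card hli, Fintype.card_subtype]

end QF

section Diag
variable {m : ℕ} (d : Fin m → ℝ)

lemma qf_diagonal (x : Fin m → ℝ) : qf (diagonal d) x = ∑ i, d i * x i ^ 2 := by
  unfold qf dotProduct
  congr 1
  funext i
  rw [mulVec_diagonal]
  ring

lemma posDefOn_coordSpan_diagonal :
    PosDefOn (diagonal d) (coordSpan (fun i => 0 < d i)) := by
  intro x hx hx0
  rw [qf_diagonal]
  have hmem := coordSpan_mem _ hx
  apply Finset.sum_pos'
  · intro i _
    by_cases h : 0 < d i
    · positivity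
    · rw [hmem i h]; simp
  · obtain ⟨i, hi⟩ := Function.ne_iff.mp hx0
    refine ⟨i, Finset.mem_univ i, ?_⟩
    have hdi : 0 < d i := by
      by_contra h
      exact hi (hmem i h)
    have : x i ≠ 0 := hi
    positivity

lemma finrank_le_of_posDefOn_diagonal (V : Submodule ℝ (Fin m → ℝ))
    (hV : PosDefOn (diagonal d) V) :
    Module.finrank ℝ V ≤ (Finset.univ.filter (fun i => 0 < d i)).card := by
  set N := coordSpan (fun i => ¬ 0 < d i) with hN
  have hdisj : V ⊓ N = ⊥ := by
    rw [Submodule.eq_bot_iff]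
    intro x hx
    by_contra hx0
    have h1 : 0 < qf (diagonal d) x := hV x hx.1 hx0
    have h2 : qf (diagonal d) x ≤ 0 := by
      rw [qf_diagonal]
      apply Finset.sum_nonpos
      intro i _
      by_cases h : 0 < d i
      · rw [coordSpan_mem _ hx.2 i (not_not_intro h)]; simp
      · have : d i ≤ 0 := not_lt.mp h
        nlinarith [sq_nonneg (x i)]
    linarith
  have hsum := Submodule.finrank_sup_add_finrank_inf_eq V N
  rw [hdisj] at hsum
  have hle : Module.finrank ℝ ↥(V ⊔ N) ≤ m := by
    have := Submodule.finrank_le (V ⊔ N)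
    simpa using this
  have hNrank : Module.finrank ℝ N = m - (Finset.univ.filter (fun i => 0 < d i)).card := by
    rw [hN, coordSpan_finrank]
    have := Finset.card_filter_add_card_filter_not
      (s := Finset.univ (α := Fin m)) (p := fun i => 0 < d i)
    rw [Finset.card_univ, Fintype.card_fin] at this
    omega
  have hcard_le : (Finset.univ.filter (fun i => 0 < d i)).card ≤ m := by
    have := Finset.card_filter_le Finset.univ (fun i => 0 < d i)
    simpa using this
  rw [show Module.finrank ℝ (⊥ : Submodule ℝ (Fin m → ℝ)) = 0 from finrank_bot ℝ _] at hsum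
  omega

end Diag

section Transport
variable {m : ℕ} {M : Matrix (Fin m) (Fin m) ℝ}

def NegDefOn (M : Matrix (Fin m) (Fin m) ℝ) (V : Submodule ℝ (Fin m → ℝ)) : Prop :=
  ∀ x ∈ V, x ≠ 0 → qf M x < 0

lemma qf_neg (M : Matrix (Fin m) (Fin m) ℝ) (x : Fin m → ℝ) : qf (-M) x = -(qf M x) := by
  unfold qf
  rw [neg_mulVec, dotProduct_neg]

lemma negDefOn_iff (M : Matrix (Fin m) (Fin m) ℝ) (V) :
    NegDefOn M V ↔ PosDefOn (-M) V := by
  unfold NegDefOn PosDefOn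
  constructor <;> intro h x hx hx0 <;> have := h x hx hx0 <;> rw [qf_neg] at * <;> linarith

/-- generic package relative to a diagonalization -/
lemma posdef_package (M : Matrix (Fin m) (Fin m) ℝ) (d : Fin m → ℝ)
    (e : (Fin m → ℝ) ≃ₗ[ℝ] (Fin m → ℝ)) (h : ∀ x, qf M x = qf (diagonal d) (e x)) :
    (∃ V : Submodule ℝ (Fin m → ℝ), Module.finrank ℝ V
        = (Finset.univ.filter (fun i => 0 < d i)).card ∧ PosDefOn M V) ∧
    (∀ V : Submodule ℝ (Fin m → ℝ), PosDefOn M V →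
        Module.finrank ℝ V ≤ (Finset.univ.filter (fun i => 0 < d i)).card) := by
  constructor
  · refine ⟨(coordSpan (fun i => 0 < d i)).map (e.symm : (Fin m → ℝ) →ₗ[ℝ] (Fin m → ℝ)),
      ?_, ?_⟩
    · rw [LinearEquiv.finrank_map_eq, coordSpan_finrank]
    · intro x hx hx0
      obtain ⟨y, hy, rfl⟩ := Submodule.mem_map.mp hx
      have hy0 : y ≠ 0 := by
        intro h0; apply hx0; rw [h0, map_zero]
      rw [h]
      simp only [LinearEquiv.coe_coe, LinearEquiv.apply_symm_apply]
      exact posDefOn_coordSpan_diagonal d y hy hy0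
  · intro V hV
    have hW : PosDefOn (diagonal d) (V.map (e : (Fin m → ℝ) →ₗ[ℝ] (Fin m → ℝ))) := by
      intro y hy hy0
      obtain ⟨x, hx, rfl⟩ := Submodule.mem_map.mp hy
      have hx0 : x ≠ 0 := by intro h0; apply hy0; rw [h0, map_zero]
      have := hV x hx hx0
      rw [h] at this
      simpa using this
    have := finrank_le_of_posDefOn_diagonal d _ hW
    rwa [LinearEquiv.finrank_map_eq] at this

lemma exists_diagonalization (hM : M.IsSymm) :
    ∃ (d : Fin m → ℝ) (e : (Fin m → ℝ) ≃ₗ[ℝ] (Fin m → ℝ)),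
      (∀ x, qf M x = qf (diagonal d) (e x)) ∧
      posEig M = (Finset.univ.filter (fun i => 0 < d i)).card ∧
      negEig M = (Finset.univ.filter (fun i => d i < 0)).card := by
  have hH : M.IsHermitian := isHermitian_of_isSymm' hM
  set U : Matrix (Fin m) (Fin m) ℝ := (hH.eigenvectorUnitary : Matrix (Fin m) (Fin m) ℝ)
    with hUdef
  have hmem := (Unitary.mem_iff.mp hH.eigenvectorUnitary.2)
  have hU2 : star U * U = 1 := hmem.1
  have hU1 : U * star U = 1 := hmem.2
  have hspec : M = U * diagonal hH.eigenvalues * star U := by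
    have := hH.spectral_theorem
    simp only [Unitary.conjStarAlgAut_apply, Unitary.coe_star] at this
    rwa [show diagonal ((RCLike.ofReal : ℝ → ℝ) ∘ hH.eigenvalues) = diagonal hH.eigenvalues
      from by rw [RCLike.ofReal_real_eq_id]; rfl] at this
  have hstar : star U = Uᵀ := by
    ext i j; simp [Matrix.star_apply]
  refine ⟨hH.eigenvalues, LinearEquiv.ofLinear (Matrix.toLin' (star U)) (Matrix.toLin' U)
    ?_ ?_, ?_, ?_, ?_⟩
  · rw [← Matrix.toLin'_mul, hU2, Matrix.toLin'_one]
  · rw [← Matrix.toLin'_mul, hU1, Matrix.toLin'_one]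
  · intro x
    simp only [LinearEquiv.ofLinear_apply, Matrix.toLin'_apply]
    conv_lhs => rw [hspec]
    unfold qf
    rw [← mulVec_mulVec, ← mulVec_mulVec, dotProduct_mulVec x U, ← Matrix.mulVec_transpose,
      ← hstar]
  · exact posEig_eq_count hH
  · exact negEig_eq_count hH

section Sylvester
variable {m : ℕ} {M : Matrix (Fin m) (Fin m) ℝ}

lemma sylvester_pos (hM : M.IsSymm) :
    (∃ V : Submodule ℝ (Fin m → ℝ), Module.finrank ℝ V = posEig M ∧ PosDefOn M V) ∧
    (∀ V : Submodule ℝ (Fin m → ℝ), PosDefOn M V → Module.finrank ℝ V ≤ posEig M) := by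
  obtain ⟨d, e, h, hp, hn⟩ := exists_diagonalization hM
  rw [hp]
  exact posdef_package M d e h

lemma sylvester_neg (hM : M.IsSymm) :
    (∃ V : Submodule ℝ (Fin m → ℝ), Module.finrank ℝ V = negEig M ∧ NegDefOn M V) ∧
    (∀ V : Submodule ℝ (Fin m → ℝ), NegDefOn M V → Module.finrank ℝ V ≤ negEig M) := by
  obtain ⟨d, e, h, hp, hn⟩ := exists_diagonalization hM
  have h' : ∀ x, qf (-M) x = qf (diagonal (-d)) (e x) := by
    intro x
    rw [qf_neg, h, show diagonal (-d) = -(diagonal d) from by ext i j : 2; by_cases hij : i = j <;> simp [diagonal, hij], qf_neg]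
  have pkg := posdef_package (-M) (-d) e h'
  have hcard : (Finset.univ.filter (fun i => 0 < (-d) i)).card
      = (Finset.univ.filter (fun i => d i < 0)).card := by
    congr 1
    apply Finset.filter_congr
    intro i _
    simp [neg_pos]
  rw [hcard, ← hn] at pkg
  obtain ⟨⟨V, hV1, hV2⟩, hbd⟩ := pkg
  refine ⟨⟨V, hV1, ?_⟩, ?_⟩
  · rw [negDefOn_iff]; exact hV2
  · intro V hV
    exact hbd V ((negDefOn_iff M V).mp hV)

end Sylvester

section Stability
variable {m : ℕ}

lemma qf_add (A B : Matrix (Fin m) (Fin m) ℝ) (x : Fin m → ℝ) :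
    qf (A + B) x = qf A x + qf B x := by
  unfold qf
  rw [add_mulVec, dotProduct_add]

lemma qf_smul (s : ℝ) (A : Matrix (Fin m) (Fin m) ℝ) (x : Fin m → ℝ) :
    qf (s • A) x = s * qf A x := by
  unfold qf
  rw [smul_mulVec, dotProduct_smul, smul_eq_mul]

lemma qf_scale (M : Matrix (Fin m) (Fin m) ℝ) (c : ℝ) (x : Fin m → ℝ) :
    qf M (c • x) = c ^ 2 * qf M x := by
  unfold qf
  rw [mulVec_smul, dotProduct_smul, smul_dotProduct, smul_eq_mul, smul_eq_mul]
  ring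

lemma qf_continuous (M : Matrix (Fin m) (Fin m) ℝ) : Continuous (qf M) := by
  have : qf M = fun x => ∑ i, x i * ∑ j, M i j * x j := by
    funext x; rfl
  rw [this]
  apply continuous_finset_sum
  intro i _
  exact (continuous_apply i).mul
    (continuous_finset_sum _ fun j _ => continuous_const.mul (continuous_apply j))

lemma posDefOn_stable (A C : Matrix (Fin m) (Fin m) ℝ) (s₀ : ℝ)
    (V : Submodule ℝ (Fin m → ℝ)) (hV : PosDefOn (A + s₀ • C) V) :
    ∃ ε > 0, ∀ s : ℝ, |s - s₀| < ε → PosDefOn (A + s • C) V := by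
  by_cases hV0 : ∀ x ∈ V, x = 0
  · exact ⟨1, one_pos, fun s _ x hx hx0 => absurd (hV0 x hx) hx0⟩
  push_neg at hV0
  obtain ⟨x₀, hx₀V, hx₀⟩ := hV0
  set K : Set (Fin m → ℝ) := Metric.sphere 0 1 ∩ V with hKdef
  have hK : IsCompact K :=
    (isCompact_sphere 0 1).inter_right (Submodule.closed_of_finiteDimensional V)
  have hsphere : ∀ x : Fin m → ℝ, x ≠ 0 → (‖x‖⁻¹ • x ∈ K ↔ x ∈ V) := by
    intro x hx
    constructor
    · intro h
      have := h.2
      have hx2 : x = ‖x‖ • (‖x‖⁻¹ • x) := by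
        rw [smul_smul, mul_inv_cancel₀ (norm_ne_zero_iff.mpr hx), one_smul]
      rw [hx2]
      exact V.smul_mem _ this
    · intro h
      refine ⟨?_, V.smul_mem _ h⟩
      rw [mem_sphere_zero_iff_norm, norm_smul, norm_inv, norm_norm,
        inv_mul_cancel₀ (norm_ne_zero_iff.mpr hx)]
  have hKne : K.Nonempty := ⟨‖x₀‖⁻¹ • x₀, (hsphere x₀ hx₀).mpr hx₀V⟩
  obtain ⟨u, huK, humin⟩ := hK.exists_isMinOn hKne (qf_continuous (A + s₀ • C)).continuousOn
  obtain ⟨v, hvK, hvmax⟩ := hK.exists_isMaxOn hKne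
    (continuous_abs.comp (qf_continuous C)).continuousOn
  set c := qf (A + s₀ • C) u with hcdef
  set b := |qf C v| with hbdef
  have hb : 0 ≤ b := abs_nonneg _
  have hc : 0 < c := by
    apply hV u huK.2
    intro h0
    have := huK.1
    rw [h0] at this
    simp at this
  refine ⟨c / (b + 1), by positivity, ?_⟩
  intro s hs x hx hx0
  have hxn : ‖x‖ ≠ 0 := norm_ne_zero_iff.mpr hx0
  set w := ‖x‖⁻¹ • x with hwdef
  have hwK : w ∈ K := (hsphere x hx0).mpr hx
  have h1 : c ≤ qf (A + s₀ • C) w := humin hwK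
  have h2 : |qf C w| ≤ b := hvmax hwK
  have key : qf (A + s • C) w = qf (A + s₀ • C) w + (s - s₀) * qf C w := by
    rw [qf_add, qf_add, qf_smul, qf_smul]; ring
  have hw : 0 < qf (A + s • C) w := by
    have hm : |(s - s₀) * qf C w| ≤ |s - s₀| * b := by
      rw [abs_mul]
      exact mul_le_mul_of_nonneg_left h2 (abs_nonneg _)
    have hlt : |s - s₀| * b < c := by
      calc |s - s₀| * b ≤ |s - s₀| * (b + 1) := by nlinarith [abs_nonneg (s - s₀)]
        _ < (c / (b + 1)) * (b + 1) := by
            apply mul_lt_mul_of_pos_right hs (by positivity)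
        _ = c := by field_simp
    have hge := (abs_lt.mp (lt_of_le_of_lt hm hlt)).1
    rw [key]
    linarith
  have hxw : x = ‖x‖ • w := by
    rw [hwdef, smul_smul, mul_inv_cancel₀ hxn, one_smul]
  have : qf (A + s • C) x = ‖x‖ ^ 2 * qf (A + s • C) w := by
    conv_lhs => rw [hxw]
    rw [qf_scale]
  rw [this]
  have h3 : (0:ℝ) < ‖x‖ ^ 2 := by positivity
  positivity

lemma negDefOn_stable (A C : Matrix (Fin m) (Fin m) ℝ) (s₀ : ℝ)
    (V : Submodule ℝ (Fin m → ℝ)) (hV : NegDefOn (A + s₀ • C) V) :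
    ∃ ε > 0, ∀ s : ℝ, |s - s₀| < ε → NegDefOn (A + s • C) V := by
  rw [negDefOn_iff] at hV
  have : -(A + s₀ • C) = (-A) + s₀ • (-C) := by rw [neg_add, smul_neg]
  rw [this] at hV
  obtain ⟨ε, hε, h⟩ := posDefOn_stable (-A) (-C) s₀ V hV
  refine ⟨ε, hε, fun s hs => ?_⟩
  rw [negDefOn_iff, neg_add, ← smul_neg]
  exact h s hs

end Stability

section Constancy
variable {m : ℕ}

lemma isSymm_add_smul {A C : Matrix (Fin m) (Fin m) ℝ} (hA : A.IsSymm) (hC : C.IsSymm)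
    (s : ℝ) : (A + s • C).IsSymm := by
  unfold Matrix.IsSymm at *
  rw [transpose_add, transpose_smul, hA, hC]

lemma counts_eq_of_line (A C : Matrix (Fin m) (Fin m) ℝ) (hA : A.IsSymm) (hC : C.IsSymm)
    (hdet : ∀ s : ℝ, IsUnit (A + s • C).det) (s : ℝ) :
    posEig (A + s • C) = posEig A ∧ negEig (A + s • C) = negEig A := by
  set F : ℝ → ℕ × ℕ := fun s => (posEig (A + s • C), negEig (A + s • C)) with hF
  have hlc : IsLocallyConstant F := by
    rw [IsLocallyConstant.iff_eventually_eq]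
    intro s₀
    have hsym : (A + s₀ • C).IsSymm := isSymm_add_smul hA hC s₀
    obtain ⟨⟨Vp, hVp1, hVp2⟩, _⟩ := sylvester_pos hsym
    obtain ⟨⟨Vn, hVn1, hVn2⟩, _⟩ := sylvester_neg hsym
    obtain ⟨ε₁, hε₁, h₁⟩ := posDefOn_stable A C s₀ Vp hVp2
    obtain ⟨ε₂, hε₂, h₂⟩ := negDefOn_stable A C s₀ Vn hVn2
    rw [Filter.eventually_iff_exists_mem]
    refine ⟨Metric.ball s₀ (min ε₁ ε₂), Metric.ball_mem_nhds _ (lt_min hε₁ hε₂), ?_⟩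
    intro s hs
    rw [Metric.mem_ball, Real.dist_eq] at hs
    have hs1 := h₁ s (lt_of_lt_of_le hs (min_le_left _ _))
    have hs2 := h₂ s (lt_of_lt_of_le hs (min_le_right _ _))
    have hsym' : (A + s • C).IsSymm := isSymm_add_smul hA hC s
    have hple := (sylvester_pos hsym').2 Vp hs1
    have hnle := (sylvester_neg hsym').2 Vn hs2
    have hsum' := posEig_add_negEig (isHermitian_of_isSymm' hsym') (hdet s)
    have hsum₀ := posEig_add_negEig (isHermitian_of_isSymm' hsym) (hdet s₀)
    have : posEig (A + s • C) = posEig (A + s₀ • C) ∧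
        negEig (A + s • C) = negEig (A + s₀ • C) := by
      constructor <;> omega
    rw [hF]
    simp only [Prod.mk.injEq]
    exact this
  have := hlc.apply_eq_of_preconnectedSpace s 0
  rw [hF] at this
  simp only [Prod.mk.injEq, zero_smul, add_zero] at this
  exact this

/-- equality of counts through a linear change of variables -/
lemma counts_eq_of_equiv (M M' : Matrix (Fin m) (Fin m) ℝ) (hM : M.IsSymm) (hM' : M'.IsSymm)
    (e : (Fin m → ℝ) ≃ₗ[ℝ] (Fin m → ℝ)) (h : ∀ x, qf M' x = qf M (e x)) :
    posEig M' = posEig M ∧ negEig M' = negEig M := by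
  have key : ∀ (N N' : Matrix (Fin m) (Fin m) ℝ), N.IsSymm → N'.IsSymm →
      ∀ (f : (Fin m → ℝ) ≃ₗ[ℝ] (Fin m → ℝ)), (∀ x, qf N' x = qf N (f x)) →
      posEig N' ≤ posEig N ∧ negEig N' ≤ negEig N := by
    intro N N' hN hN' f hf
    constructor
    · obtain ⟨⟨V, hV1, hV2⟩, _⟩ := sylvester_pos hN'
      have hmap : PosDefOn N (V.map (f : (Fin m → ℝ) →ₗ[ℝ] (Fin m → ℝ))) := by
        intro y hy hy0
        obtain ⟨x, hx, rfl⟩ := Submodule.mem_map.mp hy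
        have hx0 : x ≠ 0 := fun h0 => hy0 (by rw [h0, map_zero])
        have := hV2 x hx hx0
        rw [hf] at this
        simpa using this
      have := (sylvester_pos hN).2 _ hmap
      rw [LinearEquiv.finrank_map_eq] at this
      omega
    · obtain ⟨⟨V, hV1, hV2⟩, _⟩ := sylvester_neg hN'
      have hmap : NegDefOn N (V.map (f : (Fin m → ℝ) →ₗ[ℝ] (Fin m → ℝ))) := by
        intro y hy hy0
        obtain ⟨x, hx, rfl⟩ := Submodule.mem_map.mp hy
        have hx0 : x ≠ 0 := fun h0 => hy0 (by rw [h0, map_zero])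
        have := hV2 x hx hx0
        rw [hf] at this
        simpa using this
      have := (sylvester_neg hN).2 _ hmap
      rw [LinearEquiv.finrank_map_eq] at this
      omega
  have h1 := key M M' hM hM' e h
  have h2 := key M' M hM' hM e.symm (by
    intro x
    rw [h (e.symm x)]
    simp)
  omega

end Constancy

section Final
variable {m : ℕ}

lemma counts_neg {M : Matrix (Fin m) (Fin m) ℝ} (hM : M.IsSymm) :
    posEig (-M) = negEig M := by
  have hM' : (-M).IsSymm := by
    unfold Matrix.IsSymm at *
    rw [transpose_neg, hM]
  obtain ⟨⟨V1, h11, h12⟩, hb1⟩ := sylvester_pos hM'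
  obtain ⟨⟨V2, h21, h22⟩, hb2⟩ := sylvester_neg hM
  have e1 : NegDefOn M V1 := (negDefOn_iff M V1).mpr h12
  have e2 : PosDefOn (-M) V2 := (negDefOn_iff M V2).mp h22
  have q1 := hb2 V1 e1
  have q2 := hb1 V2 e2
  omega

end Final

theorem stmt_5 {m : ℕ} (B T W : Matrix (Fin m) (Fin m) ℝ)
    (hB : IsUnit B.det) (hT : T.IsSymm) (hW : W.IsSymm)
    (hTinv : IsUnit T.det) (hWinv : IsUnit W.det)
    (hBTW : B = T * W)
    (hnoreal : ∀ x : ℝ, ¬ B.charpoly.IsRoot x) :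
    Even m ∧
    posEig T = m / 2 ∧ negEig T = m / 2 ∧ zeroEig T = 0 ∧
    posEig W = m / 2 ∧ negEig W = m / 2 ∧ zeroEig W = 0 := by
  have hTT : T * T⁻¹ = 1 := mul_nonsing_inv T hTinv
  have hT'T : T⁻¹ * T = 1 := nonsing_inv_mul T hTinv
  have hTidet : IsUnit (T⁻¹).det := isUnit_nonsing_inv_det T hTinv
  have hTisymm : (T⁻¹).IsSymm := by
    unfold Matrix.IsSymm at *
    rw [transpose_nonsing_inv, hT]
  -- the key pencil invertibility
  have hkey : ∀ a b : ℝ, (a ≠ 0 ∨ b ≠ 0) → IsUnit ((a • T⁻¹ + b • W).det) := by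
    intro a b hab
    have hfac : a • T⁻¹ + b • W = T⁻¹ * (a • 1 + b • B) := by
      rw [Matrix.mul_add, mul_smul_comm, mul_smul_comm, Matrix.mul_one, hBTW,
        ← Matrix.mul_assoc, hT'T, Matrix.one_mul]
    rw [hfac, det_mul]
    apply hTidet.mul
    rw [isUnit_iff_ne_zero]
    rcases eq_or_ne b 0 with hb | hb
    · subst hb
      have ha : a ≠ 0 := by tauto
      rw [zero_smul, add_zero, det_smul, det_one, mul_one]
      exact pow_ne_zero _ ha
    · have h1 : a • (1 : Matrix (Fin m) (Fin m) ℝ) + b • B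
          = b • (-(((-(a/b)) • (1 : Matrix (Fin m) (Fin m) ℝ)) - B)) := by
        rw [neg_sub, smul_sub, smul_smul,
          show b * (-(a/b)) = -a from by field_simp [mul_comm], neg_smul, sub_neg_eq_add, add_comm]
      have hroot : B.charpoly.eval (-(a/b)) ≠ 0 := hnoreal (-(a/b))
      rw [h1, det_smul, det_neg, ← my_eval_charpoly, Fintype.card_fin]
      intro hcon
      rcases mul_eq_zero.mp hcon with h | h
      · exact pow_ne_zero _ hb h
      rcases mul_eq_zero.mp h with h | h
      · exact pow_ne_zero m (by norm_num : (-1:ℝ) ≠ 0) h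
      · exact hroot h
  -- chains
  have hWneg_symm : (-W).IsSymm := by
    unfold Matrix.IsSymm at *
    rw [transpose_neg, hW]
  have chain1 := counts_eq_of_line T⁻¹ (-W) hTisymm hWneg_symm (by
    intro s
    have : T⁻¹ + s • (-W) = (1:ℝ) • T⁻¹ + (-s) • W := by
      rw [one_smul, smul_neg, neg_smul]
    rw [this]
    exact hkey 1 (-s) (Or.inl one_ne_zero)) 1
  have chain2 := counts_eq_of_line (-W) T⁻¹ hWneg_symm hTisymm (by
    intro s
    have : -W + s • T⁻¹ = s • T⁻¹ + (-1:ℝ) • W := by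
      rw [neg_one_smul, add_comm]
    rw [this]
    exact hkey s (-1) (Or.inr (by norm_num))) 1
  have chain3 := counts_eq_of_line W T⁻¹ hW hTisymm (by
    intro s
    have : W + s • T⁻¹ = s • T⁻¹ + (1:ℝ) • W := by
      rw [one_smul, add_comm]
    rw [this]
    exact hkey s 1 (Or.inr one_ne_zero)) 1
  have chain4 := counts_eq_of_line T⁻¹ W hTisymm hW (by
    intro s
    have : T⁻¹ + s • W = (1:ℝ) • T⁻¹ + s • W := by rw [one_smul]
    rw [this]
    exact hkey 1 s (Or.inl one_ne_zero)) 1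
  rw [one_smul] at chain1 chain2 chain3 chain4
  have e12 : -W + T⁻¹ = T⁻¹ + -W := add_comm _ _
  rw [e12] at chain2
  have e34 : W + T⁻¹ = T⁻¹ + W := add_comm _ _
  rw [e34] at chain3
  -- counts of -W and W both equal counts of T⁻¹
  have hWc : posEig W = posEig T⁻¹ ∧ negEig W = negEig T⁻¹ := by
    constructor
    · rw [← chain3.1, chain4.1]
    · rw [← chain3.2, chain4.2]
  have hWnc : posEig (-W) = posEig T⁻¹ ∧ negEig (-W) = negEig T⁻¹ := by
    constructor
    · rw [← chain2.1, chain1.1]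
    · rw [← chain2.2, chain1.2]
  -- counts of T equal counts of T⁻¹
  have hTc := counts_eq_of_equiv T T⁻¹ hT hTisymm
    (LinearEquiv.ofLinear (Matrix.toLin' T⁻¹) (Matrix.toLin' T)
      (by rw [← Matrix.toLin'_mul, hT'T, Matrix.toLin'_one])
      (by rw [← Matrix.toLin'_mul, hTT, Matrix.toLin'_one])) (by
    intro x
    rw [LinearEquiv.ofLinear_apply, Matrix.toLin'_apply]
    unfold qf
    rw [mulVec_mulVec, hTT, one_mulVec, dotProduct_comm])
  -- balance
  have hbal : posEig W = negEig W := by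
    have h1 := counts_neg hW
    omega
  have hsumW := posEig_add_negEig (isHermitian_of_isSymm' hW) hWinv
  have hsumT := posEig_add_negEig (isHermitian_of_isSymm' hT) hTinv
  have hz1 := zeroEig_eq_zero (isHermitian_of_isSymm' hT) hTinv
  have hz2 := zeroEig_eq_zero (isHermitian_of_isSymm' hW) hWinv
  refine ⟨⟨posEig W, by omega⟩, by omega, by omega, hz1, by omega, by omega, hz2⟩
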